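/- For every natural number k and every θ ∈ [π/3, 2π/3], the arc weight u₁(θ)·u₂(θ)·v(θ)^k is greater than or equal to its value at θ = π/3, i.e. u₁(θ)·u₂(θ)·v(θ)^k ≥ u₁(π/3)·u₂(π/3)·v(π/3)^k. -/

import Mathlib

set_option maxHeartbeats 1000000


open Real

noncomputable def Dw (θ : ℝ) : ℝ :=
  Real.sin (5 * π / 4 + 3 * θ / 8) * Real.sin (5 * π / 8 - 3 * θ / 8)

noncomputable def u₁ (θ : ℝ) : ℝ :=
  Real.sin (5 * π / 4) * Real.sin (5 * π / 8 + 3 * θ / 8) / Dw θ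

noncomputable def u₂ (θ : ℝ) : ℝ :=
  Real.sin (5 * π / 4) * Real.sin (3 * θ / 8) / Dw θ

noncomputable def v (θ : ℝ) : ℝ :=
  Real.sin (5 * π / 8 + 3 * θ / 8) * Real.sin (-(3 * θ / 8)) / Dw θ

noncomputable def w₁ (θ : ℝ) : ℝ :=
  Real.sin (5 * π / 8 + 3 * θ / 8) * Real.sin (5 * π / 4 - 3 * θ / 8) / Dw θ

noncomputable def w₂ (θ : ℝ) : ℝ :=
  Real.sin (15 * π / 8 + 3 * θ / 8) * Real.sin (-(3 * θ / 8)) / Dw θ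

private lemma sin_mul_sin' (A B : ℝ) :
    Real.sin A * Real.sin B = (Real.cos (A - B) - Real.cos (A + B)) / 2 := by
  rw [Real.cos_sub, Real.cos_add]; ring

private lemma hDw (t : ℝ) :
    Dw t = (Real.cos (5 * π / 8 + 3 * t / 4) - Real.cos (π / 8)) / 2 := by
  unfold Dw
  rw [sin_mul_sin']
  have h1 : (5 * π / 4 + 3 * t / 8) - (5 * π / 8 - 3 * t / 8) = 5 * π / 8 + 3 * t / 4 := by ring
  have h2 : (5 * π / 4 + 3 * t / 8) + (5 * π / 8 - 3 * t / 8) = 2 * π - π / 8 := by ring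
  rw [h1, h2, Real.cos_sub]
  simp

private lemma hNum (t : ℝ) :
    Real.sin (5 * π / 8 + 3 * t / 8) * Real.sin (3 * t / 8)
      = (-(Real.cos (3 * π / 8)) - Real.cos (5 * π / 8 + 3 * t / 4)) / 2 := by
  rw [sin_mul_sin']
  have h1 : (5 * π / 8 + 3 * t / 8) - 3 * t / 8 = π - 3 * π / 8 := by ring
  have h2 : (5 * π / 8 + 3 * t / 8) + 3 * t / 8 = 5 * π / 8 + 3 * t / 4 := by ring
  rw [h1, h2, Real.cos_pi_sub]

private lemma h54 : Real.sin (5 * π / 4) ^ 2 = 1 / 2 := by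
  have h : Real.sin (5 * π / 4) = -(Real.sqrt 2 / 2) := by
    have e : (5 * π / 4 : ℝ) = π + π / 4 := by ring
    rw [e, Real.sin_add, Real.sin_pi, Real.cos_pi, Real.sin_pi_div_four]; ring
  rw [h]
  have h2 : Real.sqrt 2 ^ 2 = 2 := Real.sq_sqrt (by norm_num)
  nlinarith

private lemma hU (t : ℝ) (h : Real.cos (5 * π / 8 + 3 * t / 4) - Real.cos (π / 8) ≠ 0) :
    u₁ t * u₂ t = (-(Real.cos (3 * π / 8)) - Real.cos (5 * π / 8 + 3 * t / 4)) /
      (Real.cos (5 * π / 8 + 3 * t / 4) - Real.cos (π / 8)) ^ 2 := by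
  have e1 : u₁ t * u₂ t = (Real.sin (5 * π / 4) ^ 2 *
      (Real.sin (5 * π / 8 + 3 * t / 8) * Real.sin (3 * t / 8))) / (Dw t) ^ 2 := by
    unfold u₁ u₂; ring
  rw [e1, hDw, hNum, h54]
  set c := Real.cos (5 * π / 8 + 3 * t / 4)
  set A := Real.cos (π / 8)
  set B := Real.cos (3 * π / 8)
  field_simp

private lemma hV (t : ℝ) (h : Real.cos (5 * π / 8 + 3 * t / 4) - Real.cos (π / 8) ≠ 0) :
    v t = (Real.cos (5 * π / 8 + 3 * t / 4) + Real.cos (3 * π / 8)) /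
      (Real.cos (5 * π / 8 + 3 * t / 4) - Real.cos (π / 8)) := by
  unfold v
  rw [Real.sin_neg, mul_neg, hNum, hDw]
  set c := Real.cos (5 * π / 8 + 3 * t / 4)
  set A := Real.cos (π / 8)
  set B := Real.cos (3 * π / 8)
  field_simp
  ring

theorem arc_weight_minimized_at_pi_div_three :
    ∀ (k : ℕ), ∀ θ ∈ Set.Icc (π / 3) (2 * π / 3),
      u₁ θ * u₂ θ * v θ ^ k ≥ u₁ (π / 3) * u₂ (π / 3) * v (π / 3) ^ k := by
  intro k θ hθ
  obtain ⟨h1, h2⟩ := hθ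
  have hπ := Real.pi_pos
  set a := Real.cos (π / 8) with ha
  set b := Real.cos (3 * π / 8) with hb
  -- numeric bounds on a, b
  have hs2L : (1.41 : ℝ) < Real.sqrt 2 := by
    nlinarith [Real.sq_sqrt (show (0:ℝ) ≤ 2 by norm_num), Real.sqrt_nonneg 2]
  have hs2U : Real.sqrt 2 < 1.42 := by
    nlinarith [Real.sq_sqrt (show (0:ℝ) ≤ 2 by norm_num), Real.sqrt_nonneg 2]
  have ha0 : 0 ≤ a := by
    rw [ha, Real.cos_pi_div_eight]; positivity
  have ha2 : a ^ 2 = (2 + Real.sqrt 2) / 4 := by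
    rw [ha, Real.cos_pi_div_eight, div_pow, Real.sq_sqrt (by positivity)]; norm_num
  have hbe : b = Real.sin (π / 8) := by
    rw [hb, show (3 * π / 8 : ℝ) = π / 2 - π / 8 by ring, Real.cos_pi_div_two_sub]
  have hb0 : 0 ≤ b := by
    rw [hbe, Real.sin_pi_div_eight]; positivity
  have hb2 : b ^ 2 = (2 - Real.sqrt 2) / 4 := by
    rw [hbe, Real.sin_pi_div_eight, div_pow, Real.sq_sqrt (by nlinarith)]; norm_num
  have haL : (0.85 : ℝ) < a := by nlinarith
  have haU : a ≤ 1 := Real.cos_le_one _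
  have hbL : (0.38 : ℝ) < b := by nlinarith
  have hbU : b < 0.4 := by nlinarith
  -- the variable s and its range
  set s := Real.cos (5 * π / 8 + 3 * θ / 4) with hs
  have hsm1 : -1 ≤ s := Real.neg_one_le_cos _
  have hsa : s ≤ -a := by
    have e : (5 * π / 8 + 3 * θ / 4 : ℝ) = π - (3 * π / 8 - 3 * θ / 4) := by ring
    rw [hs, e, Real.cos_pi_sub]
    have hy : |3 * π / 8 - 3 * θ / 4| ≤ π / 8 := abs_le.mpr ⟨by linarith, by linarith⟩
    have hc := Real.cos_le_cos_of_nonneg_of_le_pi (abs_nonneg (3 * π / 8 - 3 * θ / 4))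
      (by linarith) hy
    rw [Real.cos_abs] at hc
    linarith
  have hs0 : Real.cos (5 * π / 8 + 3 * (π / 3) / 4) = -a := by
    rw [show (5 * π / 8 + 3 * (π / 3) / 4 : ℝ) = π - π / 8 by ring, Real.cos_pi_sub, ha]
  -- rewrite with the closed forms
  have hne : s - a ≠ 0 := by nlinarith
  have hne0 : Real.cos (5 * π / 8 + 3 * (π / 3) / 4) - a ≠ 0 := by
    rw [hs0]; nlinarith
  have hUθ := hU θ hne
  have hVθ := hV θ hne
  have hUp := hU (π / 3) hne0
  have hVp := hV (π / 3) hne0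
  rw [hs0] at hUp hVp
  rw [hUθ, hVθ, hUp, hVp]
  -- closed forms at π/3
  have eU : (-b - -a) / (-a - a) ^ 2 = (a - b) / (4 * a ^ 2) := by ring
  have eV : (-a + b) / (-a - a) = (a - b) / (2 * a) := by
    rw [show (-a + b : ℝ) = -(a - b) by ring, show (-a - a : ℝ) = -(2 * a) by ring,
      neg_div_neg_eq]
  rw [eU, eV]
  -- core inequalities
  have hfact : 0 ≤ -(s + a) := by linarith
  have hApos : (0:ℝ) < (s - a) ^ 2 := by positivity
  have h4a : (0:ℝ) < 4 * a ^ 2 := by positivity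
  have hA : (a - b) / (4 * a ^ 2) ≤ (-b - s) / (s - a) ^ 2 := by
    rw [div_le_div_iff₀ h4a hApos]
    have hq : 0 ≤ (a - b) * s + a * (a + 3 * b) := by
      nlinarith [mul_nonneg (show (0:ℝ) ≤ a - b by linarith)
        (show (0:ℝ) ≤ s + 1 by linarith),
        mul_nonneg (show (0:ℝ) ≤ a - 0.85 by linarith)
        (show (0:ℝ) ≤ b - 0.38 by linarith), sq_nonneg (a - 1/2)]
    nlinarith [mul_nonneg hfact hq]
  have hB : (a - b) / (2 * a) ≤ (s + b) / (s - a) := by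
    have e : (s + b) / (s - a) = (-(s + b)) / (a - s) := by
      rw [show (a - s : ℝ) = -(s - a) by ring, neg_div_neg_eq]
    rw [e, div_le_div_iff₀ (by linarith) (by linarith)]
    nlinarith [mul_nonneg (show (0:ℝ) ≤ a + b by linarith) hfact]
  have hr0 : (0:ℝ) ≤ (a - b) / (2 * a) := by
    apply div_nonneg <;> linarith
  have hR0 : (0:ℝ) ≤ (a - b) / (4 * a ^ 2) := by
    apply div_nonneg <;> nlinarith
  exact mul_le_mul hA (pow_le_pow_left₀ hr0 hB k) (pow_nonneg hr0 k) (le_trans hR0 hA)
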